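/- Let n be a positive integer, let S be an n×n matrix with real entries satisfying Sᵀ = S and S·S = 1, and let D be an n×n complex matrix with conj(D) = −S·D·S. Suppose φ ∈ ℂⁿ, ξ is a real number with ξ > 0, p is a complex number with |p| = 1, DᴴD·φ = ξ²·φ, and φ = p • (S·conj(φ)). Then the vector φ̃ := ξ⁻¹ • (D·φ) satisfies DDᴴ·φ̃ = ξ²·φ̃, ‖φ̃‖ = ‖φ‖, and φ̃ = −p • (S·conj(φ̃)). -/

import Mathlib

open Matrix

/-- Lemma 1, second part: for a nonzero singular value `ξ` of `D`, the vector
`φ̃ = ξ⁻¹ • D φ` is an eigenvector of `D Dᴴ` with the same eigenvalue `ξ²`, has the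
same Euclidean norm as `φ`, and satisfies the reality property with the opposite phase. -/
theorem stmt1 (n : ℕ) (hn : 0 < n) (S D : Matrix (Fin n) (Fin n) ℂ)
    (hSreal : ∀ i j, (S i j).im = 0) (hSsymm : Sᵀ = S) (hSsq : S * S = 1)
    (hD : D.map (starRingEnd ℂ) = -(S * D * S))
    (φ : Fin n → ℂ) (ξ : ℝ) (hξ : 0 < ξ) (p : ℂ) (hp : ‖p‖ = 1)
    (hEig : (Dᴴ * D).mulVec φ = ((ξ : ℂ) ^ 2) • φ)
    (hφ : φ = p • S.mulVec (star φ)) :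
    (D * Dᴴ).mulVec ((ξ : ℂ)⁻¹ • D.mulVec φ) = ((ξ : ℂ) ^ 2) • ((ξ : ℂ)⁻¹ • D.mulVec φ) ∧
    ‖(EuclideanSpace.equiv (Fin n) ℂ).symm ((ξ : ℂ)⁻¹ • D.mulVec φ)‖
      = ‖(EuclideanSpace.equiv (Fin n) ℂ).symm φ‖ ∧
    (ξ : ℂ)⁻¹ • D.mulVec φ = (-p) • S.mulVec (star ((ξ : ℂ)⁻¹ • D.mulVec φ)) := by
  have hξC : (ξ : ℂ) ≠ 0 := by exact_mod_cast hξ.ne'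
  have hstar : ∀ (A : Matrix (Fin n) (Fin n) ℂ) (v : Fin n → ℂ),
      star (A.mulVec v) = (A.map (starRingEnd ℂ)).mulVec (star v) := by
    intro A v
    funext i
    simp [Matrix.mulVec, dotProduct, map_sum, mul_comm]
  have hSconj : S.map (starRingEnd ℂ) = S := by
    ext i j
    simp [Complex.conj_eq_iff_im.mpr (hSreal i j)]
  have hstarφ : star φ = (starRingEnd ℂ p) • S.mulVec φ := by
    conv_lhs => rw [hφ]
    rw [star_smul, hstar, hSconj, star_star]
    rfl
  have hpconj : p * starRingEnd ℂ p = 1 := by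
    rw [Complex.mul_conj]
    norm_cast
    rw [Complex.normSq_eq_norm_sq, hp]; norm_num
  have hξconj : star ((ξ : ℂ)⁻¹) = (ξ : ℂ)⁻¹ := by
    simp [Complex.conj_ofReal]
  refine ⟨?_, ?_, ?_⟩
  · rw [Matrix.mulVec_smul, Matrix.mulVec_mulVec, Matrix.mul_assoc,
      ← Matrix.mulVec_mulVec, hEig, Matrix.mulVec_smul, smul_comm]
  · -- norm
    have hsq : ∀ x : Fin n → ℂ,
        (‖(EuclideanSpace.equiv (Fin n) ℂ).symm x‖ : ℝ) ^ 2
          = (dotProduct (star x) x).re := by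
      intro x
      rw [← @inner_self_eq_norm_sq ℂ]
      rw [show (inner ℂ ((EuclideanSpace.equiv (Fin n) ℂ).symm x)
          ((EuclideanSpace.equiv (Fin n) ℂ).symm x) : ℂ) = dotProduct (star x) x
        from by rw [dotProduct_comm]; rfl]
      rfl
    have hdot : dotProduct (star ((ξ : ℂ)⁻¹ • D.mulVec φ)) ((ξ : ℂ)⁻¹ • D.mulVec φ)
        = dotProduct (star φ) φ := by
      rw [star_smul, hξconj, smul_dotProduct, dotProduct_smul,
        Matrix.star_mulVec, dotProduct_mulVec, Matrix.vecMul_vecMul,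
        ← dotProduct_mulVec, hEig, dotProduct_smul]
      rw [smul_eq_mul, smul_eq_mul, smul_eq_mul, ← mul_assoc, ← mul_assoc]
      have : (ξ : ℂ)⁻¹ * (ξ : ℂ)⁻¹ * (ξ : ℂ) ^ 2 = 1 := by
        field_simp
      rw [this, one_mul]
    have h1 := hsq ((ξ : ℂ)⁻¹ • D.mulVec φ)
    have h2 := hsq φ
    rw [hdot, ← h2] at h1
    exact (sq_eq_sq₀ (norm_nonneg _) (norm_nonneg _)).mp h1
  · -- reality
    have h1 : star ((ξ:ℂ)⁻¹ • D.mulVec φ)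
        = (ξ:ℂ)⁻¹ • ((D.map (starRingEnd ℂ)).mulVec (star φ)) := by
      rw [star_smul, hξconj, hstar]
    rw [h1, hD, Matrix.mulVec_smul, Matrix.mulVec_mulVec, mul_neg,
      ← Matrix.mul_assoc, ← Matrix.mul_assoc, hSsq, one_mul, Matrix.neg_mulVec,
      ← Matrix.mulVec_mulVec, hstarφ, Matrix.mulVec_smul, Matrix.mulVec_mulVec, hSsq,
      Matrix.one_mulVec]
    rw [Matrix.mulVec_smul]
    rw [smul_neg, smul_neg, neg_smul, neg_neg, smul_smul, smul_smul]
    rw [show p * (ξ:ℂ)⁻¹ * starRingEnd ℂ p = (ξ:ℂ)⁻¹ * (p * starRingEnd ℂ p) from by ring,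
      hpconj, mul_one]
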